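/- Let S = ⟨5, 6, 9⟩ be the numerical monoid generated by 5, 6 and 9. Then ω(S) < t(S), i.e., the omega invariant of S is strictly smaller than the tame degree of S. -/

import Mathlib

open scoped BigOperators

/-- `u` divides `x` in the additive submonoid of `ℕ` generated by `A`. -/
def dvdIn (A : Set ℕ) (u x : ℕ) : Prop :=
  ∃ c ∈ AddSubmonoid.closure A, u + c = x

/-- `ω(S,u)` for the numerical monoid `S` generated by `A`. -/
noncomputable def omegaNum (A : Set ℕ) (u : ℕ) : ℕ∞ :=
  sInf {N : ℕ∞ | ∀ (n : ℕ) (a : Fin n → ℕ), (∀ i, a i ∈ AddSubmonoid.closure A) →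
    dvdIn A u (∑ i, a i) →
    ∃ Ω : Finset (Fin n), (Ω.card : ℕ∞) ≤ N ∧ dvdIn A u (∑ i ∈ Ω, a i)}

/-- `ω(S)`: the supremum over the atoms (the generators in `A`). -/
noncomputable def omegaNumS (A : Set ℕ) : ℕ∞ :=
  ⨆ u ∈ A, omegaNum A u

/-- `z` is a factorization of `a`: a multiset of generators summing to `a`. -/
def NumFact (A : Set ℕ) (a : ℕ) (z : Multiset ℕ) : Prop :=
  (∀ v ∈ z, v ∈ A) ∧ z.sum = a

/-- Distance between factorizations. -/
def numDist (z z' : Multiset ℕ) : ℕ :=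
  max (Multiset.card (z - z')) (Multiset.card (z' - z))

/-- The tame degree `t(a,u)` in the numerical monoid generated by `A`. -/
noncomputable def tameNum (A : Set ℕ) (a u : ℕ) : ℕ∞ :=
  sInf {N : ℕ∞ | ∀ z : Multiset ℕ, NumFact A a z →
    (∃ z₀ : Multiset ℕ, NumFact A a z₀ ∧ u ∈ z₀) →
    ∃ z' : Multiset ℕ, NumFact A a z' ∧ u ∈ z' ∧ (numDist z z' : ℕ∞) ≤ N}

/-- The tame degree `t(S)` of the numerical monoid generated by `A`. -/
noncomputable def tameNumS (A : Set ℕ) : ℕ∞ :=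
  ⨆ u ∈ A, ⨆ a : ℕ, tameNum A a u

/- ### Auxiliary lemmas -/

local notation "C" => AddSubmonoid.closure ({5, 6, 9} : Set ℕ)

lemma mem5 : (5 : ℕ) ∈ C := AddSubmonoid.subset_closure (by simp)
lemma mem6 : (6 : ℕ) ∈ C := AddSubmonoid.subset_closure (by simp)
lemma mem9 : (9 : ℕ) ∈ C := AddSubmonoid.subset_closure (by simp)

lemma memC_of_ge14 : ∀ n : ℕ, 14 ≤ n → n ∈ C := by
  intro n
  induction n using Nat.strong_induction_on with
  | _ n ih =>
    intro hn
    by_cases h : n ≤ 18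
    · interval_cases n
      · exact (by norm_num : (5 + 9 : ℕ) = 14) ▸ add_mem mem5 mem9
      · exact (by norm_num : (6 + 9 : ℕ) = 15) ▸ add_mem mem6 mem9
      · exact (by norm_num : (5 + (5 + 6) : ℕ) = 16) ▸ add_mem mem5 (add_mem mem5 mem6)
      · exact (by norm_num : (5 + (6 + 6) : ℕ) = 17) ▸ add_mem mem5 (add_mem mem6 mem6)
      · exact (by norm_num : (9 + 9 : ℕ) = 18) ▸ add_mem mem9 mem9
    · have h1 : n - 5 < n := by omega
      have h2 : 14 ≤ n - 5 := by omega
      have := add_mem (ih (n - 5) h1 h2) mem5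
      rwa [show n - 5 + 5 = n by omega] at this

lemma memC_ge11_ne13 {n : ℕ} (h1 : 11 ≤ n) (h2 : n ≠ 13) : n ∈ C := by
  rcases (by omega : n = 11 ∨ n = 12 ∨ 14 ≤ n) with h | h | h
  · exact h ▸ ((by norm_num : (5 + 6 : ℕ) = 11) ▸ add_mem mem5 mem6)
  · exact h ▸ ((by norm_num : (6 + 6 : ℕ) = 12) ▸ add_mem mem6 mem6)
  · exact memC_of_ge14 n h

lemma five_le_of_memC {x : ℕ} (hx : x ∈ C) (hx0 : x ≠ 0) : 5 ≤ x := by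
  have : x = 0 ∨ 5 ≤ x := by
    induction hx using AddSubmonoid.closure_induction with
    | mem y hy =>
        have : y = 5 ∨ y = 6 ∨ y = 9 := by simpa using hy
        omega
    | zero => left; rfl
    | add y z _ _ hy hz => omega
  omega

/-- The omega invariant of each atom is at most 4. -/
lemma omegaNum_le_four (u : ℕ) (hu : u ∈ ({5, 6, 9} : Set ℕ)) :
    omegaNum {5, 6, 9} u ≤ 4 := by
  classical
  apply sInf_le
  intro n a ha hdvd
  have hu9 : u = 5 ∨ u = 6 ∨ u = 9 := by simpa using hu
  set T : Finset (Fin n) := Finset.univ.filter (fun i => a i ≠ 0) with hT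
  have hsumT : ∑ i ∈ T, a i = ∑ i, a i := Finset.sum_filter_ne_zero _
  by_cases hcard : T.card ≤ 4
  · exact ⟨T, by exact_mod_cast hcard, by rwa [hsumT]⟩
  · obtain ⟨T', hT'sub, hT'card⟩ :=
      Finset.exists_subset_card_eq (show 5 ≤ T.card by omega)
    have hT'5 : ∀ i ∈ T', 5 ≤ a i := by
      intro i hi
      have := hT'sub hi
      rw [hT, Finset.mem_filter] at this
      exact five_le_of_memC (ha i) this.2
    set t := ∑ i ∈ T', a i with ht
    have ht25 : 25 ≤ t := by
      have := Finset.card_nsmul_le_sum T' a 5 hT'5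
      rw [hT'card] at this
      simpa using this
    have hj : ∃ j ∈ T', a j ≠ t - 22 := by
      by_contra hcon
      push_neg at hcon
      have : t = ∑ i ∈ T', (t - 22) := by
        rw [ht]; exact Finset.sum_congr rfl hcon
      rw [Finset.sum_const, hT'card, smul_eq_mul] at this
      omega
    obtain ⟨j, hjT', hjne⟩ := hj
    refine ⟨T'.erase j, ?_, ?_⟩
    · have : (T'.erase j).card = 4 := by
        rw [Finset.card_erase_of_mem hjT', hT'card]
      rw [this]
      exact_mod_cast le_refl 4
    · set s := ∑ i ∈ T'.erase j, a i with hs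
      have hsj : a j + s = t := by
        rw [hs, ht]; exact Finset.add_sum_erase _ _ hjT'
      have hs20 : 20 ≤ s := by
        have h5 : ∀ i ∈ T'.erase j, 5 ≤ a i := fun i hi =>
          hT'5 i (Finset.mem_of_mem_erase hi)
        have := Finset.card_nsmul_le_sum (T'.erase j) a 5 h5
        rw [Finset.card_erase_of_mem hjT', hT'card] at this
        simpa using this
      have hs22 : s ≠ 22 := by omega
      refine ⟨s - u, ?_, by omega⟩
      rcases hu9 with h | h | h
      · exact memC_of_ge14 _ (by omega)
      · exact memC_of_ge14 _ (by omega)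
      · exact memC_ge11_ne13 (by omega) (by omega)

lemma sum_eq_counts (m : Multiset ℕ) (hm : ∀ v ∈ m, v ∈ ({5, 6, 9} : Set ℕ)) :
    m.sum = 5 * m.count 5 + 6 * m.count 6 + 9 * m.count 9 := by
  induction m using Multiset.induction with
  | empty => simp
  | cons b s ih =>
    have hb : b = 5 ∨ b = 6 ∨ b = 9 := by
      simpa using hm b (Multiset.mem_cons_self b s)
    have hs := ih (fun v hv => hm v (Multiset.mem_cons_of_mem hv))
    rcases hb with h | h | h <;> subst h <;>
      simp [Multiset.count_cons, hs] <;> ring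

/-- Classification: any factorization of 27 containing 5 is `{5,5,5,6,6}`. -/
lemma fact27 (z : Multiset ℕ) (hz : NumFact {5, 6, 9} 27 z) (h5 : 5 ∈ z) :
    z = ({5, 5, 5, 6, 6} : Multiset ℕ) := by
  obtain ⟨hmem, hsum⟩ := hz
  have hx : 1 ≤ z.count 5 := Multiset.one_le_count_iff_mem.mpr h5
  have heq : 5 * z.count 5 + 6 * z.count 6 + 9 * z.count 9 = 27 := by
    rw [← sum_eq_counts z hmem, hsum]
  have h5c : z.count 5 = 3 := by omega
  have h6c : z.count 6 = 2 := by omega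
  have h9c : z.count 9 = 0 := by omega
  ext v
  by_cases hv5 : v = 5
  · subst hv5; rw [h5c]; decide
  by_cases hv6 : v = 6
  · subst hv6; rw [h6c]; decide
  by_cases hv9 : v = 9
  · subst hv9; rw [h9c]; decide
  · have hleft : z.count v = 0 := by
      rw [Multiset.count_eq_zero]
      intro hvz
      have := hmem v hvz
      simp only [Set.mem_insert_iff, Set.mem_singleton_iff] at this
      tauto
    have hright : Multiset.count v ({5, 5, 5, 6, 6} : Multiset ℕ) = 0 := by
      rw [Multiset.count_eq_zero]
      intro hvz
      simp only [Multiset.insert_eq_cons, Multiset.mem_cons, Multiset.mem_singleton] at hvz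
      tauto
    rw [hleft, hright]

lemma numFact_999 : NumFact {5, 6, 9} 27 ({9, 9, 9} : Multiset ℕ) := by
  constructor
  · intro v hv
    simp only [Multiset.insert_eq_cons, Multiset.mem_cons, Multiset.mem_singleton] at hv
    simp only [Set.mem_insert_iff, Set.mem_singleton_iff]
    tauto
  · decide

lemma numFact_55566 : NumFact {5, 6, 9} 27 ({5, 5, 5, 6, 6} : Multiset ℕ) := by
  constructor
  · intro v hv
    simp only [Multiset.insert_eq_cons, Multiset.mem_cons, Multiset.mem_singleton] at hv
    simp only [Set.mem_insert_iff, Set.mem_singleton_iff]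
    tauto
  · decide

lemma tame_ge_five : (5 : ℕ∞) ≤ tameNum {5, 6, 9} 27 5 := by
  apply le_sInf
  intro N hN
  obtain ⟨z', hz', hu, hdist⟩ :=
    hN ({9, 9, 9} : Multiset ℕ) numFact_999
      ⟨({5, 5, 5, 6, 6} : Multiset ℕ), numFact_55566, by decide⟩
  have hz'eq := fact27 z' hz' hu
  subst hz'eq
  have : numDist ({9, 9, 9} : Multiset ℕ) ({5, 5, 5, 6, 6} : Multiset ℕ) = 5 := by decide
  rw [this] at hdist
  exact_mod_cast hdist

/-- for the numerical monoid `S = ⟨5,6,9⟩`, `ω(S) < t(S)`. -/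
theorem omega_lt_tame_569 :
    omegaNumS {5, 6, 9} < tameNumS {5, 6, 9} := by
  have h1 : omegaNumS {5, 6, 9} ≤ 4 := iSup₂_le omegaNum_le_four
  have h2 : (5 : ℕ∞) ≤ tameNumS {5, 6, 9} := by
    refine le_trans tame_ge_five ?_
    have ha : tameNum {5, 6, 9} 27 5 ≤ ⨆ a : ℕ, tameNum {5, 6, 9} a 5 :=
      le_iSup (fun a => tameNum {5, 6, 9} a 5) 27
    have hb : (⨆ a : ℕ, tameNum {5, 6, 9} a 5) ≤ tameNumS {5, 6, 9} :=
      le_iSup₂ (f := fun u (_ : u ∈ ({5, 6, 9} : Set ℕ)) => ⨆ a : ℕ, tameNum {5, 6, 9} a u)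
        5 (by simp)
    exact le_trans ha hb
  calc omegaNumS {5, 6, 9} ≤ 4 := h1
    _ < 5 := by norm_num
    _ ≤ tameNumS {5, 6, 9} := h2
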